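/- Let M, T be symmetric positive definite and f(J) = M + T − T(J + T)⁻¹T. If J ⪰ 0 satisfies M ⪰ (J⁻¹ T J⁻¹ + J⁻¹)⁻¹ (with J positive definite), then f(J) ⪰ J. -/

import Mathlib

open Matrix

/-- Convergence condition of the recursive LocTrack system: for `M`, `T`, `J`
symmetric positive definite, if `M ⪰ (J⁻¹ T J⁻¹ + J⁻¹)⁻¹` then
`f(J) = M + T − T (J + T)⁻¹ T ⪰ J`. -/
theorem stmt11 {n : ℕ} (M T J : Matrix (Fin n) (Fin n) ℝ)
    (hM : M.PosDef) (hT : T.PosDef) (hJ : J.PosDef)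
    (hcond : (M - (J⁻¹ * T * J⁻¹ + J⁻¹)⁻¹).PosSemidef) :
    ((M + T - T * (J + T)⁻¹ * T) - J).PosSemidef := by
  have hJu : IsUnit J.det := hJ.det_pos.ne'.isUnit
  have hA : (J + T).PosDef := hJ.add hT
  have hAu : IsUnit (J + T).det := hA.det_pos.ne'.isUnit
  have hJl : J⁻¹ * J = 1 := Matrix.nonsing_inv_mul J hJu
  have hJr : J * J⁻¹ = 1 := Matrix.mul_nonsing_inv J hJu
  have hAl : (J + T)⁻¹ * (J + T) = 1 := Matrix.nonsing_inv_mul _ hAu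
  have hAr : (J + T) * (J + T)⁻¹ = 1 := Matrix.mul_nonsing_inv _ hAu
  have h1 : J⁻¹ * T * J⁻¹ + J⁻¹ = J⁻¹ * (J + T) * J⁻¹ := by
    rw [Matrix.mul_add, Matrix.add_mul, hJl, Matrix.one_mul]
    abel
  have h2 : (J⁻¹ * (J + T) * J⁻¹)⁻¹ = J * (J + T)⁻¹ * J := by
    rw [Matrix.mul_inv_rev, Matrix.mul_inv_rev, Matrix.nonsing_inv_nonsing_inv J hJu,
      Matrix.mul_assoc]
  have h3 : J * (J + T)⁻¹ * J = J - T + T * (J + T)⁻¹ * T := by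
    have e1 : T * (J + T)⁻¹ * T + T * (J + T)⁻¹ * J = T := by
      rw [Matrix.mul_assoc, Matrix.mul_assoc, ← Matrix.mul_add, ← Matrix.mul_add,
        add_comm T J, hAl, Matrix.mul_one]
    have e2 : J * (J + T)⁻¹ * J + T * (J + T)⁻¹ * J = J := by
      rw [← Matrix.add_mul, ← Matrix.add_mul, hAr, Matrix.one_mul]
    have := congrArg₂ (· - ·) e1 e2
    -- this : (T*(J+T)⁻¹*T + T*(J+T)⁻¹*J) - (J*(J+T)⁻¹*J + T*(J+T)⁻¹*J) = T - J
    have h4 : T * (J + T)⁻¹ * T - J * (J + T)⁻¹ * J = T - J := by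
      calc T * (J + T)⁻¹ * T - J * (J + T)⁻¹ * J
          = (T * (J + T)⁻¹ * T + T * (J + T)⁻¹ * J) - (J * (J + T)⁻¹ * J + T * (J + T)⁻¹ * J) := by abel
        _ = T - J := by rw [e1, e2]
    have := congrArg (fun X => X + J * (J + T)⁻¹ * J - T + J) h4
    linear_combination (norm := abel) - h4
  have heq : (M + T - T * (J + T)⁻¹ * T) - J = M - (J⁻¹ * T * J⁻¹ + J⁻¹)⁻¹ := by
    rw [h1, h2, h3]
    abel
  rw [heq]
  exact hcond
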